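/- For the array Φ₁₃ with rows (c,a,x,y,b,d), (d,w,a,b,z,c), (y,f,g,x,e,a), (a,g,f,e,w,z), (x,e,y,h,r,b), (b,z,e,r,h,w), every column, i.e. each of the six families i ↦ Φ₁₃ i j, is an orthonormal basis of ℂ^6. -/

import Mathlib

noncomputable section

/-- `ℂ^6` as a complex inner product space. -/
abbrev E6 : Type := EuclideanSpace ℂ (Fin 6)

/-- `1/√2` as a complex number. -/
def s2 : ℂ := (Real.sqrt 2 : ℂ)⁻¹

def va : E6 := (WithLp.equiv 2 (Fin 6 → ℂ)).symm ![1, 0, 0, 0, 0, 0]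
def vb : E6 := (WithLp.equiv 2 (Fin 6 → ℂ)).symm ![0, 1, 0, 0, 0, 0]
def vc : E6 := (WithLp.equiv 2 (Fin 6 → ℂ)).symm ![0, 0, 1, 0, 0, 0]
def vd : E6 := (WithLp.equiv 2 (Fin 6 → ℂ)).symm ![0, 0, 0, 1, 0, 0]
def ve : E6 := (WithLp.equiv 2 (Fin 6 → ℂ)).symm ![0, 0, s2, s2, 0, 0]
def vf : E6 := (WithLp.equiv 2 (Fin 6 → ℂ)).symm ![0, s2, 1/2, -(1/2), 0, 0]
def vg : E6 := (WithLp.equiv 2 (Fin 6 → ℂ)).symm ![0, s2, -(1/2), 1/2, 0, 0]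
def vh : E6 := (WithLp.equiv 2 (Fin 6 → ℂ)).symm ![s2, 0, 1/2, -(1/2), 0, 0]
def vr : E6 := (WithLp.equiv 2 (Fin 6 → ℂ)).symm ![s2, 0, -(1/2), 1/2, 0, 0]
def vx : E6 := (WithLp.equiv 2 (Fin 6 → ℂ)).symm ![0, 0, 0, 0, 1, 0]
def vy : E6 := (WithLp.equiv 2 (Fin 6 → ℂ)).symm ![0, 0, 0, 0, 0, 1]
def vz : E6 := (WithLp.equiv 2 (Fin 6 → ℂ)).symm ![0, 0, 0, 0, s2, s2]
def vw : E6 := (WithLp.equiv 2 (Fin 6 → ℂ)).symm ![0, 0, 0, 0, s2, -s2]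

/-- The array `Φ₁₃`. -/
def Phi13 : Fin 6 → Fin 6 → E6 :=
  ![![vc, va, vx, vy, vb, vd],
    ![vd, vw, va, vb, vz, vc],
    ![vy, vf, vg, vx, ve, va],
    ![va, vg, vf, ve, vw, vz],
    ![vx, ve, vy, vh, vr, vb],
    ![vb, vz, ve, vr, vh, vw]]

lemma hs2c : (starRingEnd ℂ) s2 = s2 := by
  simp [s2, ← Complex.ofReal_inv]

lemma hs2sq : s2 * s2 = 2⁻¹ := by
  have h : (Real.sqrt 2 : ℝ) * Real.sqrt 2 = 2 := Real.mul_self_sqrt (by norm_num)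
  rw [s2, ← mul_inv, ← Complex.ofReal_mul, h]
  norm_num

section mkApp
variable {α : Type*} (a0 a1 a2 a3 a4 a5 : α)

lemma mkApp0 (h : 0 < 6) : ![a0, a1, a2, a3, a4, a5] ⟨0, h⟩ = a0 := rfl
lemma mkApp1 (h : 1 < 6) : ![a0, a1, a2, a3, a4, a5] ⟨1, h⟩ = a1 := rfl
lemma mkApp2 (h : 2 < 6) : ![a0, a1, a2, a3, a4, a5] ⟨2, h⟩ = a2 := rfl
lemma mkApp3 (h : 3 < 6) : ![a0, a1, a2, a3, a4, a5] ⟨3, h⟩ = a3 := rfl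
lemma mkApp4 (h : 4 < 6) : ![a0, a1, a2, a3, a4, a5] ⟨4, h⟩ = a4 := rfl
lemma mkApp5 (h : 5 < 6) : ![a0, a1, a2, a3, a4, a5] ⟨5, h⟩ = a5 := rfl

end mkApp

lemma span_top_of_on (v : Fin 6 → E6) (h : Orthonormal ℂ v) :
    Submodule.span ℂ (Set.range v) = ⊤ := by
  apply LinearIndependent.span_eq_top_of_card_eq_finrank h.linearIndependent
  simp

set_option maxHeartbeats 2000000 in
/-- Every column of `Φ₁₃` is an orthonormal basis of `ℂ^6`. -/
theorem Phi13_cols_orthonormal_basis :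
    ∀ j : Fin 6, Orthonormal ℂ (fun i => Phi13 i j) ∧
      Submodule.span ℂ (Set.range fun i => Phi13 i j) = ⊤ := by
  have key : ∀ j : Fin 6, Orthonormal ℂ (fun i => Phi13 i j) := by
    intro j
    rw [orthonormal_iff_ite]
    intro i k
    fin_cases j <;> fin_cases i <;> fin_cases k <;>
    · simp only [Phi13, mkApp0, mkApp1, mkApp2, mkApp3, mkApp4, mkApp5,
        va, vb, vc, vd, ve, vf, vg, vh, vr, vx, vy, vz, vw, Fin.mk.injEq,
        PiLp.inner_apply, RCLike.inner_apply, WithLp.equiv_symm_apply, PiLp.toLp_apply, Matrix.cons_val,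
        Fin.sum_univ_succ, Finset.univ_eq_empty, Finset.sum_empty,
        Matrix.cons_val_zero, Matrix.cons_val_succ,
        map_zero, hs2c, hs2sq, map_one, map_neg, map_ofNat, map_inv₀, map_div₀]
      try norm_num [pow_two, hs2sq]
      try ring
  exact fun j => ⟨key j, span_top_of_on _ (key j)⟩
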